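/- Let σ be a weight function and let U(ℂ) be the space of entire functions ψ such that sup_{|Im z| ≤ k} |ψ(z)|(1+|Re z|)^k < ∞ for every k ∈ ℕ, with the Fréchet topology generated by these norms. Let U_{(σ)}(ℂ) be the subspace of ψ ∈ U(ℂ) such that sup_{|Im z| ≤ k} |ψ(z)| e^{kσ(|Re z|)} < ∞ for every k. Then U_{(σ)}(ℂ) is dense in U(ℂ). -/

import Mathlib

open Filter Asymptotics

/-- A weight function: increasing, non-negative on `[0,∞)`, with `σ(2t) = O(σ(t))` and
`log t = o(σ(t))` as `t → ∞`. -/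
def IsWeightFunction (σ : ℝ → ℝ) : Prop :=
  MonotoneOn σ (Set.Ici 0) ∧ (∀ t, 0 ≤ t → 0 ≤ σ t) ∧
    (fun t => σ (2 * t)) =O[atTop] σ ∧ (fun t => Real.log t) =o[atTop] σ

lemma sigma_poly (σ : ℝ → ℝ) (hσ : IsWeightFunction σ) :
    ∃ (m : ℕ) (A B : ℝ), 0 ≤ A ∧ 0 ≤ B ∧ ∀ t, 0 ≤ t → σ t ≤ A * t ^ m + B := by
  obtain ⟨hmono, hpos, hO, -⟩ := hσ
  rw [isBigO_iff] at hO
  obtain ⟨C, hC⟩ := hO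
  rw [eventually_atTop] at hC
  obtain ⟨T₀, hT₀⟩ := hC
  set T : ℝ := max T₀ 1 with hT
  have hT1 : (1:ℝ) ≤ T := le_max_right _ _
  have hT0 : (0:ℝ) ≤ T := by linarith
  set D : ℝ := max C 2 with hD
  have hD2 : (2:ℝ) ≤ D := le_max_right _ _
  have hD0 : (0:ℝ) ≤ D := by linarith
  have hdbl : ∀ t, T ≤ t → σ (2 * t) ≤ D * σ t := by
    intro t ht
    have h0t : (0:ℝ) ≤ t := le_trans hT0 ht
    have h := hT₀ t (le_trans (le_max_left _ _) ht)
    have h1 : σ (2 * t) ≤ C * σ t := by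
      have hs1 : 0 ≤ σ t := hpos t h0t
      have hs2 : 0 ≤ σ (2 * t) := hpos _ (by linarith)
      simpa [Real.norm_eq_abs, abs_of_nonneg hs1, abs_of_nonneg hs2] using h
    have : C * σ t ≤ D * σ t :=
      mul_le_mul_of_nonneg_right (le_max_left _ _) (hpos t h0t)
    linarith
  have hiter : ∀ n : ℕ, σ (2 ^ n * T) ≤ D ^ n * σ T := by
    intro n
    induction n with
    | zero => simp
    | succ n ih =>
      have h1 : T ≤ 2 ^ n * T := le_mul_of_one_le_left hT0 (one_le_pow₀ one_le_two)
      have h2 : σ (2 * (2 ^ n * T)) ≤ D * σ (2 ^ n * T) := hdbl _ h1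
      have h3 : D * σ (2 ^ n * T) ≤ D * (D ^ n * σ T) :=
        mul_le_mul_of_nonneg_left ih hD0
      calc σ (2 ^ (n+1) * T) = σ (2 * (2 ^ n * T)) := by ring_nf
        _ ≤ D * (D ^ n * σ T) := le_trans h2 h3
        _ = D ^ (n+1) * σ T := by ring
  obtain ⟨m, hm⟩ : ∃ m : ℕ, D ≤ 2 ^ m := by
    obtain ⟨m, hm⟩ := pow_unbounded_of_one_lt D (one_lt_two (α := ℝ))
    exact ⟨m, hm.le⟩
  refine ⟨m, D * σ T, σ T, mul_nonneg hD0 (hpos T hT0), hpos T hT0, ?_⟩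
  intro t ht
  rcases le_or_gt t T with h | h
  · have : σ t ≤ σ T := hmono (Set.mem_Ici.2 ht) (Set.mem_Ici.2 hT0) h
    nlinarith [mul_nonneg (mul_nonneg hD0 (hpos T hT0)) (pow_nonneg ht m)]
  · -- t > T ≥ 1
    have htT : (1:ℝ) ≤ t / T := (one_le_div (by linarith)).2 h.le
    obtain ⟨n, hn1, hn2⟩ := exists_nat_pow_near htT (one_lt_two (α := ℝ))
    have hTpos : (0:ℝ) < T := by linarith
    have ht2 : t ≤ 2 ^ (n + 1) * T := by
      rw [div_lt_iff₀ hTpos] at hn2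
      linarith
    have hstep : σ t ≤ D ^ (n + 1) * σ T :=
      le_trans (hmono (Set.mem_Ici.2 ht) (Set.mem_Ici.2 (by positivity)) ht2) (hiter (n + 1))
    have hDn : D ^ (n + 1) ≤ D * t ^ m := by
      have h2n : (2:ℝ) ^ n ≤ t := by
        rw [le_div_iff₀ hTpos] at hn1
        nlinarith [pow_nonneg (zero_le_two (α := ℝ)) n]
      have : D ^ n ≤ t ^ m := by
        calc D ^ n ≤ (2 ^ m) ^ n := pow_le_pow_left₀ hD0 hm n
          _ = (2 ^ n) ^ m := by rw [← pow_mul, ← pow_mul, Nat.mul_comm]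
          _ ≤ t ^ m := pow_le_pow_left₀ (by positivity) h2n m
      calc D ^ (n+1) = D * D ^ n := by ring
        _ ≤ D * t ^ m := mul_le_mul_of_nonneg_left this hD0
    have := mul_le_mul_of_nonneg_right hDn (hpos T hT0)
    nlinarith [hpos T hT0]


lemma abs_pow_sub_pow (x y : ℂ) (n : ℕ) :
    ‖x ^ n - y ^ n‖ ≤
      n * max (‖x‖) (‖y‖) ^ (n - 1) * ‖x - y‖ := by
  rw [← geom_sum₂_mul, norm_mul]
  gcongr
  set M := max (‖x‖) (‖y‖) with hM
  calc ‖∑ i ∈ Finset.range n, x ^ i * y ^ (n - 1 - i)‖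
      ≤ ∑ i ∈ Finset.range n, ‖x ^ i * y ^ (n - 1 - i)‖ :=
        norm_sum_le _ _
    _ ≤ ∑ i ∈ Finset.range n, M ^ (n - 1) := by
        apply Finset.sum_le_sum
        intro i hi
        rw [Finset.mem_range] at hi
        rw [norm_mul, norm_pow, norm_pow]
        have h1 : ‖x‖ ^ i ≤ M ^ i := pow_le_pow_left₀ (by positivity) (le_max_left _ _) i
        have h2 : ‖y‖ ^ (n-1-i) ≤ M ^ (n-1-i) :=
          pow_le_pow_left₀ (by positivity) (le_max_right _ _) _
        calc ‖x‖ ^ i * ‖y‖ ^ (n-1-i) ≤ M ^ i * M ^ (n-1-i) := by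
              apply mul_le_mul h1 h2 (by positivity) (by positivity)
          _ = M ^ (i + (n - 1 - i)) := (pow_add M i _).symm
          _ = M ^ (n - 1) := by congr 1; omega
    _ = n * M ^ (n - 1) := by rw [Finset.sum_const, Finset.card_range, nsmul_eq_mul]

lemma re_bound (N : ℕ) (hN : 1 ≤ N) (hNe : Even N) (k : ℝ) (hk : 0 ≤ k) (z : ℂ)
    (him : |z.im| ≤ k) (hre : N * k * 2 ^ N ≤ |z.re|) :
    |z.re| ^ N / 2 ≤ (z ^ N).re := by
  obtain ⟨M, rfl⟩ : ∃ M, N = M + 1 := ⟨N - 1, (Nat.succ_pred_eq_of_pos hN).symm⟩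
  set N := M + 1
  set x : ℝ := z.re with hx
  have hkx : k ≤ |x| := by
    have h1 : (1:ℝ) ≤ N * 2 ^ N := by
      have : (1:ℝ) ≤ (N:ℝ) := by exact_mod_cast hN
      nlinarith [one_le_pow₀ (one_le_two (α := ℝ)) (n := N)]
    nlinarith
  have habs : ‖z‖ ≤ 2 * |x| := by
    have := Complex.norm_le_abs_re_add_abs_im z
    simp only [← hx] at this
    linarith
  have hzx : ‖z - (x:ℂ)‖ = |z.im| := by
    have : z - (x:ℂ) = Complex.I * z.im := by
      apply Complex.ext <;> simp [hx]
    rw [this, norm_mul, Complex.norm_I, one_mul, Complex.norm_real, Real.norm_eq_abs]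
  have h1 : ‖z ^ N - (x:ℂ) ^ N‖ ≤ N * (2 * |x|) ^ M * k := by
    have := abs_pow_sub_pow z (x:ℂ) N
    have hmax : max (‖z‖) (‖(x:ℂ)‖) ≤ 2 * |x| := by
      rw [Complex.norm_real, Real.norm_eq_abs]
      exact max_le habs (by linarith [abs_nonneg x])
    calc ‖z ^ N - (x:ℂ) ^ N‖
        ≤ N * max (‖z‖) (‖(x:ℂ)‖) ^ (N - 1) * ‖z - (x:ℂ)‖ := this
      _ ≤ N * (2 * |x|) ^ M * k := by
          have hM1 : N - 1 = M := by omega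
          rw [hM1, hzx]
          apply mul_le_mul _ him (abs_nonneg _) (by positivity)
          apply mul_le_mul_of_nonneg_left _ (by positivity)
          exact pow_le_pow_left₀ (by positivity) hmax M
  have h2 : x ^ N - ‖z ^ N - (x:ℂ) ^ N‖ ≤ (z ^ N).re := by
    have h3 : ((x:ℂ) ^ N).re - (z ^ N).re ≤ ‖z ^ N - (x:ℂ) ^ N‖ := by
      have := Complex.abs_re_le_norm ((x:ℂ) ^ N - z ^ N)
      have he : ((x:ℂ) ^ N - z ^ N).re = ((x:ℂ) ^ N).re - (z ^ N).re := by simp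
      rw [he] at this
      have := le_trans (le_abs_self _) this
      rw [← norm_neg] at this
      simpa [neg_sub] using this
    have hxre : ((x:ℂ) ^ N).re = x ^ N := by
      rw [← Complex.ofReal_pow, Complex.ofReal_re]
    linarith [hxre ▸ h3]
  have hxN : x ^ N = |x| ^ N := (hNe.pow_abs x).symm
  -- N * (2*|x|)^M * k ≤ |x|^N / 2
  have hkey : N * (2 * |x|) ^ M * k ≤ |x| ^ N / 2 := by
    have hMv : (2 * |x|) ^ M = 2 ^ M * |x| ^ M := mul_pow 2 |x| M
    have h2N : (2:ℝ) ^ N = 2 * 2 ^ M * 1 := by rw [pow_succ]; ring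
    have hxM : (0:ℝ) ≤ |x| ^ M := by positivity
    have hNk : (N:ℝ) * k * 2 ^ N * |x| ^ M ≤ |x| * |x| ^ M :=
      mul_le_mul_of_nonneg_right hre hxM
    have hxNs : |x| ^ N = |x| * |x| ^ M := by rw [pow_succ]; ring
    rw [hxNs, hMv]
    rw [h2N] at hNk
    nlinarith [hNk]
  linarith [hxN ▸ h2, le_trans h1 hkey]


set_option maxHeartbeats 1000000 in
/-- Density of U_{(σ)}(ℂ) in the Silva space U(ℂ), expressed via the
defining seminorms: any ψ ∈ U(ℂ) can be approximated within ε in the first K seminorms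
of U(ℂ) by an element φ ∈ U_{(σ)}(ℂ). -/
theorem stmt6 (σ : ℝ → ℝ) (hσ : IsWeightFunction σ)
    (ψ : ℂ → ℂ) (hψ : Differentiable ℂ ψ)
    (hψU : ∀ k : ℕ, ∃ C : ℝ, ∀ z : ℂ, |z.im| ≤ k →
      ‖ψ z‖ * (1 + |z.re|) ^ k ≤ C)
    (ε : ℝ) (hε : 0 < ε) (K : ℕ) :
    ∃ φ : ℂ → ℂ, Differentiable ℂ φ ∧
      (∀ k : ℕ, ∃ C : ℝ, ∀ z : ℂ, |z.im| ≤ k →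
        ‖φ z‖ * Real.exp (k * σ |z.re|) ≤ C) ∧
      ∀ k ≤ K, ∀ z : ℂ, |z.im| ≤ k →
        ‖ψ z - φ z‖ * (1 + |z.re|) ^ k ≤ ε := by
  obtain ⟨m, A, B, hA, hB, hpoly⟩ := sigma_poly σ hσ
  set N : ℕ := 2 * m + 2 with hNdef
  have hN1 : 1 ≤ N := by omega
  have hNe : Even N := ⟨m + 1, by omega⟩
  obtain ⟨C0, hC0⟩ := hψU (K + 1)
  obtain ⟨C1, hC1def⟩ : ∃ C1 : ℝ, C1 = max C0 1 := ⟨_, rfl⟩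
  have hC1pos : (0:ℝ) < C1 := by rw [hC1def]; exact lt_of_lt_of_le one_pos (le_max_right _ _)
  have hC1b : ∀ z : ℂ, |z.im| ≤ (K:ℝ) → ‖ψ z‖ * (1 + |z.re|) ^ (K + 1) ≤ C1 := by
    intro z hz
    rw [hC1def]
    refine le_trans (hC0 z ?_) (le_max_left _ _)
    push_cast
    linarith
  clear hC1def hC0
  obtain ⟨R, hRdef⟩ : ∃ R : ℝ, R = max ((N:ℝ) * K * 2 ^ N) (max 1 (2 * C1 / ε)) := ⟨_, rfl⟩
  have hR1 : (1:ℝ) ≤ R := by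
    rw [hRdef]; exact le_trans (le_max_left _ _) (le_max_right _ _)
  have hRa : (N:ℝ) * K * 2 ^ N ≤ R := by rw [hRdef]; exact le_max_left _ _
  have hRc : 2 * C1 / ε ≤ R := by
    rw [hRdef]; exact le_trans (le_max_right _ _) (le_max_right _ _)
  clear hRdef
  obtain ⟨Mz, hMzdef⟩ : ∃ Mz : ℝ, Mz = R + K := ⟨_, rfl⟩
  have hM1 : (1:ℝ) ≤ Mz := by
    rw [hMzdef]; exact le_trans hR1 (le_add_of_nonneg_right (Nat.cast_nonneg K))
  have hM0 : (0:ℝ) < Mz := by linarith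
  have hMN : (0:ℝ) < Mz ^ N := by positivity
  obtain ⟨δ, hδdef⟩ : ∃ δ : ℝ, δ = min (1 / Mz ^ N) (ε / (2 * C1 * Mz ^ N)) := ⟨_, rfl⟩
  have hδpos : 0 < δ := by
    rw [hδdef]; exact lt_min (by positivity) (by positivity)
  have hδ1 : δ ≤ 1 / Mz ^ N := by rw [hδdef]; exact min_le_left _ _
  have hδe : δ ≤ ε / (2 * C1 * Mz ^ N) := by rw [hδdef]; exact min_le_right _ _
  clear hδdef
  -- the real part of the exponent
  have hre_val : ∀ z : ℂ, (-(δ:ℂ) * z ^ N).re = -(δ * (z ^ N).re) := by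
    intro z
    simp [Complex.mul_re]
  refine ⟨fun z => ψ z * Complex.exp (-(δ:ℂ) * z ^ N), ?_, ?_, ?_⟩
  · exact hψ.mul (((differentiable_const _).mul (differentiable_pow N)).cexp)
  · -- U_{(σ)} seminorm bounds
    intro k
    obtain ⟨Ck, hCk⟩ := hψU k
    have hCk0 : 0 ≤ Ck := le_trans (by positivity) (hCk 0 (by simp))
    have hψb : ∀ z : ℂ, |z.im| ≤ (k:ℝ) → ‖ψ z‖ ≤ Ck := by
      intro z hz
      have h1 : (1:ℝ) ≤ (1 + |z.re|) ^ k := one_le_pow₀ (by linarith [abs_nonneg z.re])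
      nlinarith [hCk z hz, norm_nonneg (ψ z)]
    obtain ⟨R2, hR2def⟩ : ∃ R2 : ℝ,
        R2 = max ((N:ℝ) * k * 2 ^ N) (max 1 (2 * k * A / δ)) := ⟨_, rfl⟩
    have hR21 : (1:ℝ) ≤ R2 := by
      rw [hR2def]; exact le_trans (le_max_left _ _) (le_max_right _ _)
    have hR2a : (N:ℝ) * k * 2 ^ N ≤ R2 := by rw [hR2def]; exact le_max_left _ _
    have hR2b : 2 * k * A / δ ≤ R2 := by
      rw [hR2def]; exact le_trans (le_max_right _ _) (le_max_right _ _)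
    clear hR2def
    refine ⟨Ck * (Real.exp (k * B) +
      Real.exp (δ * (R2 + k) ^ N + k * (A * R2 ^ m + B))), ?_⟩
    intro z him
    have key : ‖Complex.exp (-(δ:ℂ) * z ^ N)‖ * Real.exp (k * σ |z.re|)
        ≤ Real.exp (k * B) + Real.exp (δ * (R2 + k) ^ N + k * (A * R2 ^ m + B)) := by
      rw [Complex.norm_exp, hre_val, ← Real.exp_add]
      have hk0 : (0:ℝ) ≤ (k:ℝ) := Nat.cast_nonneg k
      rcases le_or_gt R2 |z.re| with hx | hx
      · -- far regime
        have hreb : |z.re| ^ N / 2 ≤ (z ^ N).re :=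
          re_bound N hN1 hNe k hk0 z him (le_trans hR2a hx)
        have hσb : σ |z.re| ≤ A * |z.re| ^ m + B := hpoly _ (abs_nonneg _)
        have hx1 : (1:ℝ) ≤ |z.re| := le_trans hR21 hx
        have habsorb : (k:ℝ) * (A * |z.re| ^ m) ≤ δ * (|z.re| ^ N / 2) := by
          have h2 : 2 * k * A / δ ≤ |z.re| := le_trans hR2b hx
          have h5 : 2 * k * A ≤ δ * |z.re| := by
            rw [div_le_iff₀ hδpos] at h2; linarith
          have h3 : |z.re| ≤ |z.re| ^ (N - m) := by
            calc |z.re| = |z.re| ^ 1 := (pow_one _).symm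
              _ ≤ |z.re| ^ (N - m) := pow_le_pow_right₀ hx1 (by omega)
          have h4 : |z.re| ^ N = |z.re| ^ (N - m) * |z.re| ^ m := by
            rw [← pow_add]; congr 1; omega
          have hxm : (0:ℝ) ≤ |z.re| ^ m := by positivity
          calc (k:ℝ) * (A * |z.re| ^ m) ≤ (δ * |z.re| / 2) * |z.re| ^ m := by nlinarith
            _ ≤ (δ * |z.re| ^ (N - m) / 2) * |z.re| ^ m := by
                apply mul_le_mul_of_nonneg_right _ hxm
                have := mul_le_mul_of_nonneg_left h3 hδpos.le
                linarith
            _ = δ * (|z.re| ^ N / 2) := by rw [h4]; ring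
        have hmain : -(δ * (z ^ N).re) + k * σ |z.re| ≤ k * B := by
          have e1 : δ * (|z.re| ^ N / 2) ≤ δ * (z ^ N).re :=
            mul_le_mul_of_nonneg_left hreb hδpos.le
          have e2 : (k:ℝ) * σ |z.re| ≤ k * (A * |z.re| ^ m + B) :=
            mul_le_mul_of_nonneg_left hσb hk0
          nlinarith
        calc Real.exp (-(δ * (z ^ N).re) + k * σ |z.re|) ≤ Real.exp (k * B) :=
              Real.exp_le_exp.2 hmain
          _ ≤ _ := le_add_of_nonneg_right (Real.exp_nonneg _)
      · -- near regime
        have hzb : ‖z‖ ≤ R2 + k :=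
          le_trans (Complex.norm_le_abs_re_add_abs_im z) (by linarith)
        have h1 : -(δ * (z ^ N).re) ≤ δ * (R2 + k) ^ N := by
          have h0 : |(z ^ N).re| ≤ ‖z ^ N‖ := Complex.abs_re_le_norm _
          have h2 : ‖z ^ N‖ ≤ (R2 + k) ^ N := by
            rw [norm_pow]
            exact pow_le_pow_left₀ (norm_nonneg z) hzb N
          have h3 : -(z ^ N).re ≤ (R2 + k) ^ N := by
            have := neg_abs_le ((z ^ N).re)
            linarith
          calc -(δ * (z ^ N).re) = δ * (-(z ^ N).re) := by ring
            _ ≤ δ * (R2 + k) ^ N := mul_le_mul_of_nonneg_left h3 hδpos.le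
        have h2 : σ |z.re| ≤ A * R2 ^ m + B := by
          have h5 := hpoly |z.re| (abs_nonneg _)
          have h4 : A * |z.re| ^ m ≤ A * R2 ^ m :=
            mul_le_mul_of_nonneg_left
              (pow_le_pow_left₀ (abs_nonneg _) hx.le m) hA
          linarith
        have h6 : -(δ * (z ^ N).re) + k * σ |z.re|
            ≤ δ * (R2 + k) ^ N + k * (A * R2 ^ m + B) := by
          have := mul_le_mul_of_nonneg_left h2 hk0
          linarith
        calc Real.exp (-(δ * (z ^ N).re) + k * σ |z.re|)
            ≤ Real.exp (δ * (R2 + k) ^ N + k * (A * R2 ^ m + B)) := Real.exp_le_exp.2 h6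
          _ ≤ _ := le_add_of_nonneg_left (Real.exp_nonneg _)
    calc ‖ψ z * Complex.exp (-(δ:ℂ) * z ^ N)‖ * Real.exp (k * σ |z.re|)
        = ‖ψ z‖ *
          (‖Complex.exp (-(δ:ℂ) * z ^ N)‖ * Real.exp (k * σ |z.re|)) := by
          rw [norm_mul]; ring
      _ ≤ Ck * (Real.exp (k * B) + Real.exp (δ * (R2 + k) ^ N + k * (A * R2 ^ m + B))) := by
          apply mul_le_mul (hψb z him) key (by positivity) hCk0
  · -- approximation within ε
    suffices H : ∀ z : ℂ, |z.im| ≤ (K:ℝ) →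
        ‖ψ z - ψ z * Complex.exp (-(δ:ℂ) * z ^ N)‖ * (1 + |z.re|) ^ K ≤ ε by
      intro k hk z him
      have h1 : |z.im| ≤ (K:ℝ) := le_trans him (by exact_mod_cast hk)
      have h2 : (1 + |z.re|) ^ k ≤ (1 + |z.re|) ^ K :=
        pow_le_pow_right₀ (by linarith [abs_nonneg z.re]) hk
      calc ‖ψ z - ψ z * Complex.exp (-(δ:ℂ) * z ^ N)‖ * (1 + |z.re|) ^ k
          ≤ ‖ψ z - ψ z * Complex.exp (-(δ:ℂ) * z ^ N)‖ * (1 + |z.re|) ^ K :=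
            mul_le_mul_of_nonneg_left h2 (norm_nonneg _)
        _ ≤ ε := H z h1
    intro z him
    have hfact : ψ z - ψ z * Complex.exp (-(δ:ℂ) * z ^ N)
        = ψ z * (1 - Complex.exp (-(δ:ℂ) * z ^ N)) := by ring
    rw [hfact, norm_mul]
    have hψK1 : ‖ψ z‖ * (1 + |z.re|) ^ (K + 1) ≤ C1 := hC1b z him
    have habs1 : (1:ℝ) ≤ 1 + |z.re| := by linarith [abs_nonneg z.re]
    rcases le_or_gt R |z.re| with hx | hx
    · -- far regime: |1 - e^w| ≤ 2 and ψ is small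
      have hreb : (0:ℝ) ≤ (z ^ N).re := by
        have h1 := re_bound N hN1 hNe K (Nat.cast_nonneg K) z him (le_trans hRa hx)
        have h0 : (0:ℝ) ≤ |z.re| ^ N / 2 := by positivity
        linarith
      have hexp1 : ‖Complex.exp (-(δ:ℂ) * z ^ N)‖ ≤ 1 := by
        rw [Complex.norm_exp, hre_val]
        exact Real.exp_le_one_iff.2 (neg_nonpos.2 (mul_nonneg hδpos.le hreb))
      have h2e : ‖1 - Complex.exp (-(δ:ℂ) * z ^ N)‖ ≤ 2 := by
        refine le_trans (norm_sub_le _ _) ?_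
        rw [norm_one]
        linarith
      have hsmall : ‖ψ z‖ * (1 + |z.re|) ^ K ≤ ε / 2 := by
        have hRx : 2 * C1 / ε ≤ |z.re| := le_trans hRc hx
        have h7 : 2 * C1 ≤ ε * (1 + |z.re|) := by
          rw [div_le_iff₀ hε] at hRx
          nlinarith [hε.le]
        have hnn : (0:ℝ) ≤ ‖ψ z‖ * (1 + |z.re|) ^ K := by positivity
        have h8 : 2 * C1 * (‖ψ z‖ * (1 + |z.re|) ^ K)
            ≤ ε * (1 + |z.re|) * (‖ψ z‖ * (1 + |z.re|) ^ K) :=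
          mul_le_mul_of_nonneg_right h7 hnn
        have h9 : ε * (1 + |z.re|) * (‖ψ z‖ * (1 + |z.re|) ^ K)
            = ε * (‖ψ z‖ * (1 + |z.re|) ^ (K + 1)) := by
          rw [pow_succ]; ring
        have h10 : ε * (‖ψ z‖ * (1 + |z.re|) ^ (K + 1)) ≤ ε * C1 :=
          mul_le_mul_of_nonneg_left hψK1 hε.le
        have h11 : 2 * C1 * (‖ψ z‖ * (1 + |z.re|) ^ K)
            ≤ 2 * C1 * (ε / 2) := by linarith
        exact le_of_mul_le_mul_left h11 (by positivity)
      calc ‖ψ z‖ * ‖1 - Complex.exp (-(δ:ℂ) * z ^ N)‖ * (1 + |z.re|) ^ K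
          = ‖1 - Complex.exp (-(δ:ℂ) * z ^ N)‖ *
            (‖ψ z‖ * (1 + |z.re|) ^ K) := by ring
        _ ≤ 2 * (ε / 2) := mul_le_mul h2e hsmall (by positivity) (by norm_num)
        _ = ε := by ring
    · -- near regime: the exponential is close to 1
      have hzb : ‖z‖ ≤ Mz := by
        refine le_trans (Complex.norm_le_abs_re_add_abs_im z) ?_
        rw [hMzdef]
        linarith
      have hwabs : ‖-(δ:ℂ) * z ^ N‖ ≤ δ * Mz ^ N := by
        rw [norm_mul, norm_neg, norm_pow, Complex.norm_real, Real.norm_eq_abs, abs_of_pos hδpos]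
        exact mul_le_mul_of_nonneg_left
          (pow_le_pow_left₀ (norm_nonneg z) hzb N) hδpos.le
      have hw1 : ‖-(δ:ℂ) * z ^ N‖ ≤ 1 := by
        have h12 : δ * Mz ^ N ≤ (1 / Mz ^ N) * Mz ^ N := mul_le_mul_of_nonneg_right hδ1 hMN.le
        rw [one_div_mul_cancel hMN.ne'] at h12
        linarith
      have hdist : ‖1 - Complex.exp (-(δ:ℂ) * z ^ N)‖ ≤ 2 * (δ * Mz ^ N) := by
        rw [← norm_neg, neg_sub]
        refine le_trans (Complex.norm_exp_sub_one_le hw1) ?_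
        linarith [hwabs]
      have hδ2 : δ * (2 * C1 * Mz ^ N) ≤ ε := by
        rw [← le_div_iff₀ (by positivity)]
        exact hδe
      calc ‖ψ z‖ * ‖1 - Complex.exp (-(δ:ℂ) * z ^ N)‖ * (1 + |z.re|) ^ K
          = ‖1 - Complex.exp (-(δ:ℂ) * z ^ N)‖ *
            (‖ψ z‖ * (1 + |z.re|) ^ K) := by ring
        _ ≤ (2 * (δ * Mz ^ N)) * C1 := by
            apply mul_le_mul hdist _ (by positivity) (by positivity)
            calc ‖ψ z‖ * (1 + |z.re|) ^ K
                ≤ ‖ψ z‖ * (1 + |z.re|) ^ (K + 1) := by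
                  apply mul_le_mul_of_nonneg_left _ (norm_nonneg _)
                  exact pow_le_pow_right₀ habs1 (by omega)
              _ ≤ C1 := hψK1
        _ = δ * (2 * C1 * Mz ^ N) := by ring
        _ ≤ ε := hδ2
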